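/- Let $0 < \epsilon < 1/100$ and suppose $H = (V_1 \cup V_2 \cup V_3, E)$ is a tripartite $3$-uniform hypergraph (every edge has one vertex in each part) such that each of $V_1, V_2, V_3$ is almost $\epsilon$-good with respect to $H$. Then $d_H(V_1, V_2, V_3) \in [0, 4\epsilon^{1/16}) \cup (1 - 4\epsilon^{1/16}, 1]$. -/

import Mathlib

open scoped Classical
open Finset

private lemma num_bound {ε : ℝ} (hε0 : 0 < ε) (hε1 : ε < 1/100) :
    9 * Real.sqrt ε + 2 * ε < 4 * ε ^ ((1:ℝ)/16) := by
  have hε1' : ε < 1 := by linarith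
  have hu : 0 < ε ^ ((1:ℝ)/16) := Real.rpow_pos_of_pos hε0 _
  have h1 : ε < ε ^ ((1:ℝ)/16) := by
    nth_rewrite 1 [← Real.rpow_one ε]
    exact Real.rpow_lt_rpow_of_exponent_gt hε0 hε1' (by norm_num)
  have h2 : 9 * Real.sqrt ε ≤ 2 * ε ^ ((1:ℝ)/16) := by
    have hsq : Real.sqrt ε = ε ^ ((7:ℝ)/16) * ε ^ ((1:ℝ)/16) := by
      rw [← Real.rpow_add hε0, Real.sqrt_eq_rpow]; norm_num
    have h7 : ε ^ ((7:ℝ)/16) ≤ (2:ℝ)/9 := by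
      have hle : ε ^ ((7:ℝ)/16) ≤ (1/100 : ℝ) ^ ((7:ℝ)/16) :=
        Real.rpow_le_rpow hε0.le hε1.le (by norm_num)
      have h2' : ((1/100 : ℝ) ^ ((7:ℝ)/16)) ≤ 2/9 := by
        apply le_of_pow_le_pow_left₀ (n := 16) (by norm_num) (by norm_num)
        have hpow : ((1/100 : ℝ) ^ ((7:ℝ)/16)) ^ (16:ℕ) = (1/100 : ℝ) ^ (7:ℕ) := by
          rw [← Real.rpow_natCast ((1/100 : ℝ) ^ ((7:ℝ)/16)) 16,
            ← Real.rpow_mul (by norm_num : (0:ℝ) ≤ 1/100),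
            show ((7:ℝ)/16 * ((16:ℕ):ℝ)) = ((7:ℕ):ℝ) by push_cast; ring,
            Real.rpow_natCast]
        rw [hpow]; norm_num
      linarith
    have := mul_le_mul_of_nonneg_right h7 hu.le
    calc 9 * Real.sqrt ε = 9 * (ε ^ ((7:ℝ)/16) * ε ^ ((1:ℝ)/16)) := by rw [hsq]
      _ ≤ 9 * ((2/9) * ε ^ ((1:ℝ)/16)) := by nlinarith
      _ = 2 * ε ^ ((1:ℝ)/16) := by ring
  linarith

private lemma sum_card_filter_comm {β γ : Type*} (s : Finset β) (t : Finset γ) (P : β → γ → Prop) :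
    ∑ y ∈ s, ((t.filter fun z => P y z).card) = ∑ z ∈ t, ((s.filter fun y => P y z).card) := by
  simp only [Finset.card_filter]
  exact Finset.sum_comm

private lemma card_filter_prod_fst {β γ : Type*} (s : Finset β) (t : Finset γ) (P : β → γ → Prop) :
    ((s ×ˢ t).filter fun p => P p.1 p.2).card = ∑ y ∈ s, ((t.filter fun z => P y z).card) := by
  rw [Finset.card_filter, Finset.sum_product]
  simp only [Finset.card_filter]

private lemma card_filter_prod_snd {β γ : Type*} (s : Finset β) (t : Finset γ) (P : β → γ → Prop) :
    ((s ×ˢ t).filter fun p => P p.1 p.2).card = ∑ z ∈ t, ((s.filter fun y => P y z).card) := by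
  rw [card_filter_prod_fst, sum_card_filter_comm]

private lemma card_filter_triple {β : Type*} (V1 V2 V3 : Finset β) (E : β → β → β → Prop) :
    (((V1 ×ˢ V2 ×ˢ V3).filter fun p => E p.1 p.2.1 p.2.2).card)
      = ∑ y ∈ V2, ∑ z ∈ V3, ((V1.filter fun x => E x y z).card) := by
  rw [Finset.card_filter, Finset.sum_product]
  simp only [Finset.sum_product, Finset.card_filter]
  rw [Finset.sum_comm]
  exact Finset.sum_congr rfl fun y _ => Finset.sum_comm

private lemma sum_le_card_mul {γ : Type*} (s : Finset γ) (f : γ → ℝ) (b : ℝ)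
    (h : ∀ z ∈ s, f z ≤ b) : ∑ z ∈ s, f z ≤ (s.card : ℝ) * b := by
  have := Finset.sum_le_card_nsmul s f b h
  rwa [nsmul_eq_mul] at this

private lemma card_mul_le_sum {γ : Type*} (s : Finset γ) (f : γ → ℝ) (b : ℝ)
    (h : ∀ z ∈ s, b ≤ f z) : (s.card : ℝ) * b ≤ ∑ z ∈ s, f z := by
  have := Finset.card_nsmul_le_sum s f b h
  rwa [nsmul_eq_mul] at this

private lemma card_filter_le_real {γ : Type*} (s : Finset γ) (p : γ → Prop) :
    ((s.filter p).card : ℝ) ≤ (s.card : ℝ) :=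
  Nat.cast_le.mpr (Finset.card_filter_le _ _)

private lemma sum_card_filter_comm'' {β γ : Type*} (s : Finset β) (t : Finset γ) (P : β → γ → Prop) :
    ∑ y ∈ s, (((t.filter fun z => P y z).card : ℝ)) = ∑ z ∈ t, (((s.filter fun y => P y z).card : ℝ)) := by
  have : ∑ y ∈ s, ((t.filter fun z => P y z).card) = ∑ z ∈ t, ((s.filter fun y => P y z).card) := by
    simp only [Finset.card_filter]; exact Finset.sum_comm
  exact_mod_cast congrArg (Nat.cast : ℕ → ℝ) this

/-- count of elements of `s` satisfying `p` is at least `s.card - #(t.filter ¬p)` when `s ⊆ t`. -/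
private lemma filter_card_lower {γ : Type*} (s t : Finset γ) (p : γ → Prop) (hst : s ⊆ t) :
    (s.card : ℝ) - ((t.filter fun z => ¬ p z).card : ℝ) ≤ ((s.filter p).card : ℝ) := by
  have h1 : (s.filter p).card + (s.filter fun z => ¬ p z).card = s.card :=
    Finset.card_filter_add_card_filter_not _
  have h2 : (s.filter fun z => ¬ p z).card ≤ (t.filter fun z => ¬ p z).card :=
    Finset.card_le_card (Finset.monotone_filter_left _ hst)
  have h1' : ((s.filter p).card : ℝ) + ((s.filter fun z => ¬ p z).card : ℝ) = (s.card : ℝ) := by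
    exact_mod_cast congrArg (Nat.cast : ℕ → ℝ) h1
  have h2' : ((s.filter fun z => ¬ p z).card : ℝ) ≤ ((t.filter fun z => ¬ p z).card : ℝ) :=
    Nat.cast_le.mpr h2
  linarith

/-- Claim 1: ∑_y a(y) s(y) ≤ 2 ε n1 n2 n3. -/
private lemma claim1 {α₁ α₂ α₃ : Type*} (W1 : Finset α₁) (W2 : Finset α₂) (W3 : Finset α₃)
    (F : α₁ → α₂ → α₃ → Prop) (ε : ℝ) (hε0 : 0 < ε) :
    ∑ y ∈ W2,
      ((W1.filter fun x => (1-ε) * W3.card < ((W3.filter fun z => F x y z).card : ℝ)).card : ℝ)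
        * ((W3.filter fun z => ((W1.filter fun x => F x y z).card : ℝ) < ε * W1.card).card : ℝ)
      ≤ 2 * ε * ((W1.card : ℝ) * ((W2.card : ℝ) * (W3.card : ℝ))) := by
  set n1 := (W1.card : ℝ) with hn1
  set n2 := (W2.card : ℝ) with hn2
  set n3 := (W3.card : ℝ) with hn3
  have hn1' : (0:ℝ) ≤ n1 := Nat.cast_nonneg _
  have hn2' : (0:ℝ) ≤ n2 := Nat.cast_nonneg _
  have hn3' : (0:ℝ) ≤ n3 := Nat.cast_nonneg _
  set P : ℝ := ∑ y ∈ W2, ∑ z ∈ (W3.filter fun z => ((W1.filter fun x => F x y z).card : ℝ) < ε * W1.card),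
      ((W1.filter fun x => F x y z).card : ℝ) with hP
  -- upper bound
  have hPupper : P ≤ ε * n1 * (n2 * n3) := by
    have hin : ∀ y ∈ W2, (∑ z ∈ (W3.filter fun z => ((W1.filter fun x => F x y z).card : ℝ) < ε * W1.card),
        ((W1.filter fun x => F x y z).card : ℝ)) ≤ n3 * (ε * n1) := by
      intro y _
      calc (∑ z ∈ (W3.filter fun z => ((W1.filter fun x => F x y z).card : ℝ) < ε * W1.card),
          ((W1.filter fun x => F x y z).card : ℝ))
          ≤ ((W3.filter fun z => ((W1.filter fun x => F x y z).card : ℝ) < ε * W1.card).card : ℝ) * (ε * n1) :=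
            sum_le_card_mul _ _ _ (fun z hz => (Finset.mem_filter.mp hz).2.le)
        _ ≤ n3 * (ε * n1) :=
            mul_le_mul_of_nonneg_right (card_filter_le_real _ _) (by positivity)
    calc P ≤ ∑ y ∈ W2, (n3 * (ε * n1)) := Finset.sum_le_sum hin
      _ = n2 * (n3 * (ε * n1)) := by rw [Finset.sum_const, nsmul_eq_mul]
      _ = ε * n1 * (n2 * n3) := by ring
  -- lower bound
  have hPlower : ∀ y ∈ W2,
      ((W1.filter fun x => (1-ε) * W3.card < ((W3.filter fun z => F x y z).card : ℝ)).card : ℝ)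
        * (((W3.filter fun z => ((W1.filter fun x => F x y z).card : ℝ) < ε * W1.card).card : ℝ) - ε * n3)
      ≤ ∑ z ∈ (W3.filter fun z => ((W1.filter fun x => F x y z).card : ℝ) < ε * W1.card),
        ((W1.filter fun x => F x y z).card : ℝ) := by
    intro y _
    set Sy := W3.filter fun z => ((W1.filter fun x => F x y z).card : ℝ) < ε * W1.card with hSy
    set Ay := W1.filter fun x => (1-ε) * W3.card < ((W3.filter fun z => F x y z).card : ℝ) with hAy
    -- swap the inner double sum
    have hswap : (∑ z ∈ Sy, ((W1.filter fun x => F x y z).card : ℝ))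
        = ∑ x ∈ W1, ((Sy.filter fun z => F x y z).card : ℝ) := by
      rw [sum_card_filter_comm'']
    rw [hswap]
    have hterm : ∀ x ∈ Ay, ((Sy.card : ℝ) - ε * n3) ≤ ((Sy.filter fun z => F x y z).card : ℝ) := by
      intro x hx
      have hxA := (Finset.mem_filter.mp hx).2
      have hnon : ((W3.filter fun z => ¬ F x y z).card : ℝ) ≤ ε * n3 := by
        have h1 : ((W3.filter fun z => F x y z).card : ℝ) + ((W3.filter fun z => ¬ F x y z).card : ℝ) = n3 := by
          rw [hn3, ← Finset.card_filter_add_card_filter_not (s := W3) (p := fun z => F x y z)]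
          push_cast; ring
        linarith
      have := filter_card_lower Sy W3 (fun z => F x y z) (Finset.filter_subset _ _)
      linarith
    calc (Ay.card : ℝ) * ((Sy.card : ℝ) - ε * n3)
        ≤ ∑ x ∈ Ay, ((Sy.filter fun z => F x y z).card : ℝ) := card_mul_le_sum _ _ _ hterm
      _ ≤ ∑ x ∈ W1, ((Sy.filter fun z => F x y z).card : ℝ) := by
          apply Finset.sum_le_sum_of_subset_of_nonneg (Finset.filter_subset _ _)
          intro x _ _; positivity
  -- combine
  have hsum : ∑ y ∈ W2,
      ((W1.filter fun x => (1-ε) * W3.card < ((W3.filter fun z => F x y z).card : ℝ)).card : ℝ)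
        * (((W3.filter fun z => ((W1.filter fun x => F x y z).card : ℝ) < ε * W1.card).card : ℝ) - ε * n3)
      ≤ P := Finset.sum_le_sum hPlower
  have hsplit : ∀ y ∈ W2,
      ((W1.filter fun x => (1-ε) * W3.card < ((W3.filter fun z => F x y z).card : ℝ)).card : ℝ)
        * ((W3.filter fun z => ((W1.filter fun x => F x y z).card : ℝ) < ε * W1.card).card : ℝ)
      ≤ ((W1.filter fun x => (1-ε) * W3.card < ((W3.filter fun z => F x y z).card : ℝ)).card : ℝ)
        * (((W3.filter fun z => ((W1.filter fun x => F x y z).card : ℝ) < ε * W1.card).card : ℝ) - ε * n3)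
        + n1 * (ε * n3) := by
    intro y _
    have ha : ((W1.filter fun x => (1-ε) * W3.card < ((W3.filter fun z => F x y z).card : ℝ)).card : ℝ) ≤ n1 :=
      card_filter_le_real _ _
    have ha0 : (0:ℝ) ≤ ((W1.filter fun x => (1-ε) * W3.card < ((W3.filter fun z => F x y z).card : ℝ)).card : ℝ) :=
      Nat.cast_nonneg _
    nlinarith [mul_nonneg (sub_nonneg.mpr ha) (mul_nonneg hε0.le hn3')]
  calc ∑ y ∈ W2,
      ((W1.filter fun x => (1-ε) * W3.card < ((W3.filter fun z => F x y z).card : ℝ)).card : ℝ)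
        * ((W3.filter fun z => ((W1.filter fun x => F x y z).card : ℝ) < ε * W1.card).card : ℝ)
      ≤ ∑ y ∈ W2, (((W1.filter fun x => (1-ε) * W3.card < ((W3.filter fun z => F x y z).card : ℝ)).card : ℝ)
        * (((W3.filter fun z => ((W1.filter fun x => F x y z).card : ℝ) < ε * W1.card).card : ℝ) - ε * n3)
        + n1 * (ε * n3)) := Finset.sum_le_sum hsplit
    _ = (∑ y ∈ W2,
      ((W1.filter fun x => (1-ε) * W3.card < ((W3.filter fun z => F x y z).card : ℝ)).card : ℝ)
        * (((W3.filter fun z => ((W1.filter fun x => F x y z).card : ℝ) < ε * W1.card).card : ℝ) - ε * n3))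
        + n2 * (n1 * (ε * n3)) := by rw [Finset.sum_add_distrib, Finset.sum_const, nsmul_eq_mul]
    _ ≤ P + n2 * (n1 * (ε * n3)) := by linarith
    _ ≤ ε * n1 * (n2 * n3) + n2 * (n1 * (ε * n3)) := by linarith
    _ = 2 * ε * (n1 * (n2 * n3)) := by ring
open scoped Classical
open Finset

private lemma card_filter_or_le {γ : Type*} (s : Finset γ) (p q : γ → Prop) :
    ((s.filter fun x => p x ∨ q x).card : ℝ) ≤ ((s.filter p).card : ℝ) + ((s.filter q).card : ℝ) := by
  have h : (s.filter fun x => p x ∨ q x).card ≤ (s.filter p).card + (s.filter q).card := by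
    rw [Finset.filter_or]
    exact Finset.card_union_le _ _
  exact_mod_cast h

private lemma card_filter_disj_le {γ : Type*} (s : Finset γ) (p q : γ → Prop)
    (h : ∀ x ∈ s, p x → q x → False) :
    ((s.filter p).card : ℝ) + ((s.filter q).card : ℝ) ≤ (s.card : ℝ) := by
  have hd : Disjoint (s.filter p) (s.filter q) := by
    rw [Finset.disjoint_left]
    intro x hx hx'
    exact h x (Finset.mem_filter.mp hx).1 (Finset.mem_filter.mp hx).2 (Finset.mem_filter.mp hx').2
  have := Finset.card_union_of_disjoint hd
  have hle : (s.filter p ∪ s.filter q).card ≤ s.card :=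
    Finset.card_le_card (Finset.union_subset (Finset.filter_subset _ _) (Finset.filter_subset _ _))
  rw [this] at hle
  exact_mod_cast hle

/-- purely numerical core of Step B -/
private lemma stepB_abstract {α₂ : Type*} (W2 : Finset α₂) (a c b s : α₂ → ℝ) (n1 n2 n3 ε : ℝ)
    (hn1 : 0 < n1) (hn30 : 0 ≤ n3) (hε0 : 0 < ε) (hn2card : n2 = (W2.card : ℝ))
    (ha0 : ∀ y ∈ W2, 0 ≤ a y) (hc0 : ∀ y ∈ W2, 0 ≤ c y)
    (hb0 : ∀ y ∈ W2, 0 ≤ b y) (hs0 : ∀ y ∈ W2, 0 ≤ s y)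
    (hac : ∀ y ∈ W2, a y + c y ≤ n1) (hbs : ∀ y ∈ W2, b y + s y ≤ n3)
    (hb3 : ∀ y ∈ W2, b y ≤ n3)
    (hE : ∑ y ∈ W2, (n1 - a y - c y) ≤ ε * (n1 * n2))
    (hE' : ∑ y ∈ W2, (n3 - b y - s y) ≤ ε * (n2 * n3))
    (hC1 : ∑ y ∈ W2, a y * s y ≤ 2 * ε * (n1 * (n2 * n3)))
    (hC2 : ∑ y ∈ W2, c y * b y ≤ 2 * ε * (n1 * (n2 * n3))) :
    ∑ y ∈ W2, min (b y) (n3 - b y) ≤ 6 * ε * (n2 * n3) := by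
  have hpt : ∀ y ∈ W2, n1 * min (b y) (n3 - b y)
      ≤ a y * s y + c y * b y + (n1 - a y - c y) * n3 + n1 * (n3 - b y - s y) := by
    intro y hy
    have hm1 : min (b y) (n3 - b y) ≤ b y := min_le_left _ _
    have hm2 : min (b y) (n3 - b y) ≤ n3 - b y := min_le_right _ _
    have h1 : a y * ((n3 - b y) - min (b y) (n3 - b y)) ≥ 0 :=
      mul_nonneg (ha0 y hy) (by linarith)
    have h2 : c y * (b y - min (b y) (n3 - b y)) ≥ 0 :=
      mul_nonneg (hc0 y hy) (by linarith)
    have h3 : (n1 - a y - c y) * (n3 - min (b y) (n3 - b y)) ≥ 0 :=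
      mul_nonneg (by have := hac y hy; linarith) (by have := hb3 y hy; linarith)
    have h4 : (n1 - a y) * (n3 - b y - s y) ≥ 0 :=
      mul_nonneg (by have := hac y hy; have := hc0 y hy; linarith) (by have := hbs y hy; linarith)
    nlinarith [h1, h2, h3, h4]
  have hsum : n1 * ∑ y ∈ W2, min (b y) (n3 - b y) ≤ 6 * ε * (n1 * (n2 * n3)) := by
    rw [Finset.mul_sum]
    calc ∑ y ∈ W2, n1 * min (b y) (n3 - b y)
        ≤ ∑ y ∈ W2, (a y * s y + c y * b y + (n1 - a y - c y) * n3 + n1 * (n3 - b y - s y)) :=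
          Finset.sum_le_sum hpt
      _ = (∑ y ∈ W2, a y * s y) + (∑ y ∈ W2, c y * b y)
          + (∑ y ∈ W2, (n1 - a y - c y)) * n3 + n1 * (∑ y ∈ W2, (n3 - b y - s y)) := by
          rw [Finset.sum_add_distrib, Finset.sum_add_distrib, Finset.sum_add_distrib,
            ← Finset.sum_mul, ← Finset.mul_sum]
      _ ≤ 2 * ε * (n1 * (n2 * n3)) + 2 * ε * (n1 * (n2 * n3)) + (ε * (n1 * n2)) * n3
          + n1 * (ε * (n2 * n3)) := by
          have h3' : (∑ y ∈ W2, (n1 - a y - c y)) * n3 ≤ (ε * (n1 * n2)) * n3 :=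
            mul_le_mul_of_nonneg_right hE hn30
          have h4' : n1 * (∑ y ∈ W2, (n3 - b y - s y)) ≤ n1 * (ε * (n2 * n3)) :=
            mul_le_mul_of_nonneg_left hE' hn1.le
          linarith
      _ = 6 * ε * (n1 * (n2 * n3)) := by ring
  have := (mul_le_mul_iff_right₀ hn1).mp (by linarith : n1 * ∑ y ∈ W2, min (b y) (n3 - b y) ≤ n1 * (6 * ε * (n2 * n3)))
  linarith

open scoped Classical
open Finset

private lemma stepB {α₁ α₂ α₃ : Type*} (W1 : Finset α₁) (W2 : Finset α₂) (W3 : Finset α₃)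
    (F : α₁ → α₂ → α₃ → Prop) (ε : ℝ) (hε0 : 0 < ε) (hε2 : ε ≤ 1/2)
    (hn1 : 0 < (W1.card : ℝ))
    (hg3 : (1 - ε) * ((W1.card : ℝ) * (W2.card : ℝ)) ≤ ∑ y ∈ W2,
      ((W1.filter fun x => ((W3.filter fun z => F x y z).card : ℝ) < ε * W3.card ∨
        (1-ε) * W3.card < ((W3.filter fun z => F x y z).card : ℝ)).card : ℝ))
    (hg1 : (1 - ε) * ((W2.card : ℝ) * (W3.card : ℝ)) ≤ ∑ y ∈ W2,
      ((W3.filter fun z => ((W1.filter fun x => F x y z).card : ℝ) < ε * W1.card ∨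
        (1-ε) * W1.card < ((W1.filter fun x => F x y z).card : ℝ)).card : ℝ)) :
    ∑ y ∈ W2, min
        ((W3.filter fun z => (1-ε) * W1.card < ((W1.filter fun x => F x y z).card : ℝ)).card : ℝ)
        ((W3.card : ℝ) - ((W3.filter fun z => (1-ε) * W1.card < ((W1.filter fun x => F x y z).card : ℝ)).card : ℝ))
      ≤ 6 * ε * ((W2.card : ℝ) * (W3.card : ℝ)) := by
  have hn30 : (0:ℝ) ≤ (W3.card : ℝ) := Nat.cast_nonneg _
  have hn10 : (0:ℝ) ≤ (W1.card : ℝ) := Nat.cast_nonneg _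
  -- claim 2 via claim 1 applied to ¬F
  have eqc : ∀ y : α₂, (W1.filter fun x => (1-ε) * W3.card < ((W3.filter fun z => ¬ F x y z).card : ℝ))
      = (W1.filter fun x => ((W3.filter fun z => F x y z).card : ℝ) < ε * W3.card) := by
    intro y
    apply Finset.filter_congr
    intro x _
    have h1 : ((W3.filter fun z => F x y z).card : ℝ) + ((W3.filter fun z => ¬ F x y z).card : ℝ)
        = (W3.card : ℝ) := by
      rw [← Finset.card_filter_add_card_filter_not (s := W3) (p := fun z => F x y z)]
      push_cast; ring
    constructor <;> intro h <;> [linarith; linarith]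
  have eqb : ∀ y : α₂, (W3.filter fun z => ((W1.filter fun x => ¬ F x y z).card : ℝ) < ε * W1.card)
      = (W3.filter fun z => (1-ε) * W1.card < ((W1.filter fun x => F x y z).card : ℝ)) := by
    intro y
    apply Finset.filter_congr
    intro z _
    have h1 : ((W1.filter fun x => F x y z).card : ℝ) + ((W1.filter fun x => ¬ F x y z).card : ℝ)
        = (W1.card : ℝ) := by
      rw [← Finset.card_filter_add_card_filter_not (s := W1) (p := fun x => F x y z)]
      push_cast; ring
    constructor <;> intro h <;> [linarith; linarith]
  have hC2 : ∑ y ∈ W2,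
      ((W1.filter fun x => ((W3.filter fun z => F x y z).card : ℝ) < ε * W3.card).card : ℝ)
        * ((W3.filter fun z => (1-ε) * W1.card < ((W1.filter fun x => F x y z).card : ℝ)).card : ℝ)
      ≤ 2 * ε * ((W1.card : ℝ) * ((W2.card : ℝ) * (W3.card : ℝ))) := by
    have := claim1 W1 W2 W3 (fun x y z => ¬ F x y z) ε hε0
    calc ∑ y ∈ W2,
        ((W1.filter fun x => ((W3.filter fun z => F x y z).card : ℝ) < ε * W3.card).card : ℝ)
          * ((W3.filter fun z => (1-ε) * W1.card < ((W1.filter fun x => F x y z).card : ℝ)).card : ℝ)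
        = ∑ y ∈ W2,
        ((W1.filter fun x => (1-ε) * W3.card < ((W3.filter fun z => ¬ F x y z).card : ℝ)).card : ℝ)
          * ((W3.filter fun z => ((W1.filter fun x => ¬ F x y z).card : ℝ) < ε * W1.card).card : ℝ) := by
          refine Finset.sum_congr rfl fun y _ => ?_
          rw [eqc y, eqb y]
      _ ≤ 2 * ε * ((W1.card : ℝ) * ((W2.card : ℝ) * (W3.card : ℝ))) := by
          beta_reduce at this
          convert this using 2 with y hy
          congr!
  -- apply the abstract lemma
  refine stepB_abstract W2
    (fun y => ((W1.filter fun x => (1-ε) * W3.card < ((W3.filter fun z => F x y z).card : ℝ)).card : ℝ))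
    (fun y => ((W1.filter fun x => ((W3.filter fun z => F x y z).card : ℝ) < ε * W3.card).card : ℝ))
    (fun y => ((W3.filter fun z => (1-ε) * W1.card < ((W1.filter fun x => F x y z).card : ℝ)).card : ℝ))
    (fun y => ((W3.filter fun z => ((W1.filter fun x => F x y z).card : ℝ) < ε * W1.card).card : ℝ))
    (W1.card : ℝ) (W2.card : ℝ) (W3.card : ℝ) ε hn1 hn30 hε0 rfl
    (fun y _ => Nat.cast_nonneg _) (fun y _ => Nat.cast_nonneg _)
    (fun y _ => Nat.cast_nonneg _) (fun y _ => Nat.cast_nonneg _)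
    ?_ ?_ ?_ ?_ ?_ ?_ hC2
  · -- hac
    intro y _
    apply card_filter_disj_le
    intro x _ hbig hsmall
    nlinarith [mul_nonneg (by linarith : (0:ℝ) ≤ 1 - 2*ε) hn30]
  · -- hbs
    intro y _
    apply card_filter_disj_le
    intro z _ hbig hsmall
    nlinarith [mul_nonneg (by linarith : (0:ℝ) ≤ 1 - 2*ε) hn10]
  · -- hb3
    intro y _
    exact card_filter_le_real _ _
  · -- hE
    have hub : ∀ y ∈ W2,
        ((W1.filter fun x => ((W3.filter fun z => F x y z).card : ℝ) < ε * W3.card ∨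
          (1-ε) * W3.card < ((W3.filter fun z => F x y z).card : ℝ)).card : ℝ)
        ≤ ((W1.filter fun x => ((W3.filter fun z => F x y z).card : ℝ) < ε * W3.card).card : ℝ)
          + ((W1.filter fun x => (1-ε) * W3.card < ((W3.filter fun z => F x y z).card : ℝ)).card : ℝ) :=
      fun y _ => card_filter_or_le _ _ _
    have h1 := le_trans hg3 (Finset.sum_le_sum hub)
    rw [Finset.sum_add_distrib] at h1
    rw [Finset.sum_sub_distrib, Finset.sum_sub_distrib, Finset.sum_const, nsmul_eq_mul]
    linarith
  · -- hE'
    have hub : ∀ y ∈ W2,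
        ((W3.filter fun z => ((W1.filter fun x => F x y z).card : ℝ) < ε * W1.card ∨
          (1-ε) * W1.card < ((W1.filter fun x => F x y z).card : ℝ)).card : ℝ)
        ≤ ((W3.filter fun z => ((W1.filter fun x => F x y z).card : ℝ) < ε * W1.card).card : ℝ)
          + ((W3.filter fun z => (1-ε) * W1.card < ((W1.filter fun x => F x y z).card : ℝ)).card : ℝ) :=
      fun y _ => card_filter_or_le _ _ _
    have h1 := le_trans hg1 (Finset.sum_le_sum hub)
    rw [Finset.sum_add_distrib] at h1
    rw [Finset.sum_sub_distrib, Finset.sum_sub_distrib, Finset.sum_const, nsmul_eq_mul]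
    linarith
  · -- hC1
    exact claim1 W1 W2 W3 F ε hε0

open scoped Classical
open Finset

private lemma sum_card_filter_comm_not {β γ : Type*} (s : Finset β) (t : Finset γ) (P : β → γ → Prop) :
    ∑ y ∈ s, (((t.filter fun z => ¬ P y z).card : ℝ)) = ∑ z ∈ t, (((s.filter fun y => ¬ P y z).card : ℝ)) := by
  have h : ∑ y ∈ s, ((t.filter fun z => ¬ P y z).card) = ∑ z ∈ t, ((s.filter fun y => ¬ P y z).card) := by
    simp only [Finset.card_filter]; exact Finset.sum_comm
  exact_mod_cast congrArg (Nat.cast : ℕ → ℝ) h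

set_option maxHeartbeats 2000000 in
private lemma graphSym {β γ : Type*} (W2 : Finset β) (W3 : Finset γ) (R : β → γ → Prop)
    (θ η : ℝ) (hθ0 : 0 < θ) (hθ2 : θ ≤ 1/2) (hη0 : 0 ≤ η)
    (hn2 : 0 < (W2.card : ℝ)) (hn3 : 0 < (W3.card : ℝ)) (hkey : 4*θ + η < 1)
    (h2 : ((W2.filter fun y => θ * W3.card ≤ ((W3.filter fun z => R y z).card : ℝ) ∧
          ((W3.filter fun z => R y z).card : ℝ) ≤ (1-θ) * W3.card).card : ℝ) ≤ η * W2.card)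
    (h3 : ((W3.filter fun z => θ * W2.card ≤ ((W2.filter fun y => R y z).card : ℝ) ∧
          ((W2.filter fun y => R y z).card : ℝ) ≤ (1-θ) * W2.card).card : ℝ) ≤ η * W3.card) :
    (∑ y ∈ W2, ((W3.filter fun z => R y z).card : ℝ)) ≤ (3*θ+η) * ((W2.card : ℝ) * (W3.card : ℝ))
    ∨ (1 - (3*θ+η)) * ((W2.card : ℝ) * (W3.card : ℝ)) ≤ ∑ y ∈ W2, ((W3.filter fun z => R y z).card : ℝ) := by
  set A := W2.filter fun y => (1-θ) * (W3.card : ℝ) < ((W3.filter fun z => R y z).card : ℝ) with hA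
  set C := W2.filter fun y => ((W3.filter fun z => R y z).card : ℝ) < θ * (W3.card : ℝ) with hC
  set M := W2.filter fun y => θ * (W3.card : ℝ) ≤ ((W3.filter fun z => R y z).card : ℝ) ∧
      ((W3.filter fun z => R y z).card : ℝ) ≤ (1-θ) * (W3.card : ℝ) with hM
  have hMb : (M.card : ℝ) ≤ η * W2.card := h2
  have hcov : ∀ y ∈ W2, y ∈ A ∨ y ∈ C ∨ y ∈ M := by
    intro y hy
    simp only [hA, hC, hM, Finset.mem_filter]
    rcases lt_or_ge ((W3.filter fun z => R y z).card : ℝ) (θ * (W3.card : ℝ)) with h | h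
    · exact Or.inr (Or.inl ⟨hy, h⟩)
    rcases le_or_gt ((W3.filter fun z => R y z).card : ℝ) ((1-θ) * (W3.card : ℝ)) with h' | h'
    · exact Or.inr (Or.inr ⟨hy, h, h'⟩)
    · exact Or.inl ⟨hy, h'⟩
  have hcards : (W2.card : ℝ) ≤ (A.card : ℝ) + (C.card : ℝ) + (M.card : ℝ) := by
    have hsub : W2 ⊆ A ∪ C ∪ M := by
      intro y hy
      rcases hcov y hy with h | h | h
      · exact Finset.mem_union_left _ (Finset.mem_union_left _ h)
      · exact Finset.mem_union_left _ (Finset.mem_union_right _ h)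
      · exact Finset.mem_union_right _ h
    have h1 := Finset.card_le_card hsub
    have h2' := Finset.card_union_le (A ∪ C) M
    have h3' := Finset.card_union_le A C
    have : W2.card ≤ A.card + C.card + M.card := by omega
    exact_mod_cast this
  have hdegle : ∀ y : β, ((W3.filter fun z => R y z).card : ℝ) ≤ (W3.card : ℝ) :=
    fun y => card_filter_le_real _ _
  have hdeg0 : ∀ y : β, (0:ℝ) ≤ ((W3.filter fun z => R y z).card : ℝ) := fun y => Nat.cast_nonneg _
  by_cases hAc : (A.card : ℝ) < 2*θ*(W2.card : ℝ)
  · left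
    have hsplit := Finset.sum_filter_add_sum_filter_not W2
      (fun y => ((W3.filter fun z => R y z).card : ℝ) < θ * (W3.card : ℝ))
      (fun y => ((W3.filter fun z => R y z).card : ℝ))
    have hCb : ∑ y ∈ C, ((W3.filter fun z => R y z).card : ℝ) ≤ (W2.card : ℝ) * (θ * (W3.card : ℝ)) := by
      calc ∑ y ∈ C, ((W3.filter fun z => R y z).card : ℝ)
          ≤ (C.card : ℝ) * (θ * (W3.card : ℝ)) := by
            apply sum_le_card_mul
            intro y hy
            exact le_of_lt (Finset.mem_filter.mp hy).2
        _ ≤ (W2.card : ℝ) * (θ * (W3.card : ℝ)) := by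
            apply mul_le_mul_of_nonneg_right (card_filter_le_real _ _) (by positivity)
    have hnotsub : (W2.filter fun y => ¬ (((W3.filter fun z => R y z).card : ℝ) < θ * (W3.card : ℝ)))
        ⊆ A ∪ M := by
      intro y hy
      have hy' := Finset.mem_filter.mp hy
      rcases hcov y hy'.1 with h | h | h
      · exact Finset.mem_union_left _ h
      · exact absurd (Finset.mem_filter.mp h).2 hy'.2
      · exact Finset.mem_union_right _ h
    have hnotb : ∑ y ∈ (W2.filter fun y => ¬ (((W3.filter fun z => R y z).card : ℝ) < θ * (W3.card : ℝ))),
        ((W3.filter fun z => R y z).card : ℝ) ≤ ((A.card : ℝ) + (M.card : ℝ)) * (W3.card : ℝ) := by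
      calc ∑ y ∈ (W2.filter fun y => ¬ (((W3.filter fun z => R y z).card : ℝ) < θ * (W3.card : ℝ))),
          ((W3.filter fun z => R y z).card : ℝ)
          ≤ (((W2.filter fun y => ¬ (((W3.filter fun z => R y z).card : ℝ) < θ * (W3.card : ℝ))).card : ℝ))
            * (W3.card : ℝ) := sum_le_card_mul _ _ _ (fun y _ => hdegle y)
        _ ≤ ((A.card : ℝ) + (M.card : ℝ)) * (W3.card : ℝ) := by
            apply mul_le_mul_of_nonneg_right _ hn3.le
            have h1 := Finset.card_le_card hnotsub
            have h2' := Finset.card_union_le A M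
            have : (W2.filter fun y => ¬ (((W3.filter fun z => R y z).card : ℝ) < θ * (W3.card : ℝ))).card
                ≤ A.card + M.card := le_trans h1 h2'
            exact_mod_cast this
    have hCsum : ∑ y ∈ (W2.filter fun y => (((W3.filter fun z => R y z).card : ℝ) < θ * (W3.card : ℝ))),
        ((W3.filter fun z => R y z).card : ℝ) = ∑ y ∈ C, ((W3.filter fun z => R y z).card : ℝ) := by rw [hC]
    nlinarith [hsplit, hCb, hnotb, hMb, hAc, hCsum, mul_le_mul_of_nonneg_right (le_of_lt hAc) hn3.le,
      mul_le_mul_of_nonneg_right hMb hn3.le]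
  · by_cases hCc : (C.card : ℝ) < 2*θ*(W2.card : ℝ)
    · right
      have hAlb : (1 - 2*θ - η) * (W2.card : ℝ) ≤ (A.card : ℝ) := by nlinarith [hcards, hMb, hCc]
      have hge : (A.card : ℝ) * ((1-θ) * (W3.card : ℝ)) ≤ ∑ y ∈ A, ((W3.filter fun z => R y z).card : ℝ) := by
        apply card_mul_le_sum
        intro y hy
        exact le_of_lt (Finset.mem_filter.mp hy).2
      have hsub2 : ∑ y ∈ A, ((W3.filter fun z => R y z).card : ℝ) ≤ ∑ y ∈ W2, ((W3.filter fun z => R y z).card : ℝ) := by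
        apply Finset.sum_le_sum_of_subset_of_nonneg (Finset.filter_subset _ _)
        intro y _ _; exact hdeg0 y
      have hstep : (1 - 2*θ - η) * (W2.card : ℝ) * ((1-θ) * (W3.card : ℝ))
          ≤ (A.card : ℝ) * ((1-θ) * (W3.card : ℝ)) :=
        mul_le_mul_of_nonneg_right hAlb (by nlinarith)
      nlinarith [mul_nonneg (mul_nonneg hn2.le hn3.le) (mul_nonneg hθ0.le hθ0.le),
        mul_nonneg (mul_nonneg hn2.le hn3.le) (mul_nonneg hη0 hθ0.le)]
    · exfalso
      push_neg at hAc hCc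
      have hApos : (0:ℝ) < (A.card : ℝ) := lt_of_lt_of_le (by positivity) hAc
      have hCpos : (0:ℝ) < (C.card : ℝ) := lt_of_lt_of_le (by positivity) hCc
      set A' := W3.filter fun z => (1-θ) * (W2.card : ℝ) < ((W2.filter fun y => R y z).card : ℝ) with hA'
      set C' := W3.filter fun z => ((W2.filter fun y => R y z).card : ℝ) < θ * (W2.card : ℝ) with hC'
      set M' := W3.filter fun z => θ * (W2.card : ℝ) ≤ ((W2.filter fun y => R y z).card : ℝ) ∧
          ((W2.filter fun y => R y z).card : ℝ) ≤ (1-θ) * (W2.card : ℝ) with hM'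
      have hM'b : (M'.card : ℝ) ≤ η * W3.card := h3
      have hcards3 : (W3.card : ℝ) ≤ (A'.card : ℝ) + (C'.card : ℝ) + (M'.card : ℝ) := by
        have hsub : W3 ⊆ A' ∪ C' ∪ M' := by
          intro z hz
          simp only [hA', hC', hM', Finset.mem_union, Finset.mem_filter]
          rcases lt_or_ge ((W2.filter fun y => R y z).card : ℝ) (θ * (W2.card : ℝ)) with h | h
          · exact Or.inl (Or.inr ⟨hz, h⟩)
          rcases le_or_gt ((W2.filter fun y => R y z).card : ℝ) ((1-θ) * (W2.card : ℝ)) with h' | h'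
          · exact Or.inr ⟨hz, h, h'⟩
          · exact Or.inl (Or.inl ⟨hz, h'⟩)
        have h1 := Finset.card_le_card hsub
        have h2' := Finset.card_union_le (A' ∪ C') M'
        have h3' := Finset.card_union_le A' C'
        have : W3.card ≤ A'.card + C'.card + M'.card := by omega
        exact_mod_cast this
      -- identity: nonedges from a vertex
      have hneg : ∀ y : β, ((W3.filter fun z => ¬ R y z).card : ℝ)
          = (W3.card : ℝ) - ((W3.filter fun z => R y z).card : ℝ) := by
        intro y
        have := Finset.card_filter_add_card_filter_not (s := W3) (p := fun z => R y z)
        have h' : ((W3.filter fun z => R y z).card : ℝ) + ((W3.filter fun z => ¬ R y z).card : ℝ)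
            = (W3.card : ℝ) := by exact_mod_cast this
        linarith
      -- bound C' : few z see few of A
      have hC'b : (C'.card : ℝ) ≤ 2*θ*(W3.card : ℝ) := by
        have hNup : ∑ y ∈ A, ((W3.filter fun z => ¬ R y z).card : ℝ) ≤ (A.card : ℝ) * (θ * (W3.card : ℝ)) := by
          apply sum_le_card_mul
          intro y hy
          have := (Finset.mem_filter.mp hy).2
          rw [hneg y]
          linarith
        have hNsw : ∑ y ∈ A, ((W3.filter fun z => ¬ R y z).card : ℝ)
            = ∑ z ∈ W3, ((A.filter fun y => ¬ R y z).card : ℝ) := sum_card_filter_comm_not _ _ _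
        have hNlow : (C'.card : ℝ) * ((A.card : ℝ) - θ * (W2.card : ℝ))
            ≤ ∑ z ∈ W3, ((A.filter fun y => ¬ R y z).card : ℝ) := by
          have hterm : ∀ z ∈ C', ((A.card : ℝ) - θ * (W2.card : ℝ)) ≤ ((A.filter fun y => ¬ R y z).card : ℝ) := by
            intro z hz
            have hzC := (Finset.mem_filter.mp hz).2
            have hid : ((A.filter fun y => R y z).card : ℝ) + ((A.filter fun y => ¬ R y z).card : ℝ)
                = (A.card : ℝ) := by
              exact_mod_cast Finset.card_filter_add_card_filter_not (s := A) (p := fun y => R y z)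
            have hsub' : ((A.filter fun y => R y z).card : ℝ) ≤ ((W2.filter fun y => R y z).card : ℝ) := by
              have : (A.filter fun y => R y z) ⊆ (W2.filter fun y => R y z) :=
                Finset.monotone_filter_left _ (Finset.filter_subset _ _)
              exact_mod_cast Finset.card_le_card this
            linarith
          calc (C'.card : ℝ) * ((A.card : ℝ) - θ * (W2.card : ℝ))
              ≤ ∑ z ∈ C', ((A.filter fun y => ¬ R y z).card : ℝ) := card_mul_le_sum _ _ _ hterm
            _ ≤ ∑ z ∈ W3, ((A.filter fun y => ¬ R y z).card : ℝ) := by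
                apply Finset.sum_le_sum_of_subset_of_nonneg (Finset.filter_subset _ _)
                intro z _ _; exact Nat.cast_nonneg _
        rw [← hNsw] at hNlow
        have hN2 := hNlow.trans hNup
        have hC'0 : (0:ℝ) ≤ (C'.card : ℝ) := Nat.cast_nonneg _
        by_contra hcon
        push_neg at hcon
        have hp1 : (0:ℝ) ≤ (C'.card : ℝ) * ((A.card : ℝ) - 2*θ*(W2.card : ℝ)) :=
          mul_nonneg hC'0 (by linarith)
        have hp2 : (0:ℝ) < (A.card : ℝ) * ((C'.card : ℝ) - 2*θ*(W3.card : ℝ)) :=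
          mul_pos hApos (by linarith)
        nlinarith [hN2, hp1, hp2]
      -- bound A' : few z see many of C
      have hA'b : (A'.card : ℝ) ≤ 2*θ*(W3.card : ℝ) := by
        have hEup : ∑ y ∈ C, ((W3.filter fun z => R y z).card : ℝ) ≤ (C.card : ℝ) * (θ * (W3.card : ℝ)) := by
          apply sum_le_card_mul
          intro y hy
          exact le_of_lt (Finset.mem_filter.mp hy).2
        have hEsw : ∑ y ∈ C, ((W3.filter fun z => R y z).card : ℝ)
            = ∑ z ∈ W3, ((C.filter fun y => R y z).card : ℝ) := sum_card_filter_comm'' _ _ _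
        have hElow : (A'.card : ℝ) * ((C.card : ℝ) - θ * (W2.card : ℝ))
            ≤ ∑ z ∈ W3, ((C.filter fun y => R y z).card : ℝ) := by
          have hterm : ∀ z ∈ A', ((C.card : ℝ) - θ * (W2.card : ℝ)) ≤ ((C.filter fun y => R y z).card : ℝ) := by
            intro z hz
            have hzA := (Finset.mem_filter.mp hz).2
            have hsplit' : ((W2.filter fun y => R y z).card : ℝ)
                ≤ ((C.filter fun y => R y z).card : ℝ) + ((W2.card : ℝ) - (C.card : ℝ)) := by
              have hsubu : (W2.filter fun y => R y z) ⊆ (C.filter fun y => R y z) ∪ (W2 \ C) := by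
                intro y hy
                have hy' := Finset.mem_filter.mp hy
                by_cases hyC : y ∈ C
                · exact Finset.mem_union_left _ (Finset.mem_filter.mpr ⟨hyC, hy'.2⟩)
                · exact Finset.mem_union_right _ (Finset.mem_sdiff.mpr ⟨hy'.1, hyC⟩)
              have h1 := Finset.card_le_card hsubu
              have h2' := Finset.card_union_le (C.filter fun y => R y z) (W2 \ C)
              have h3' : (W2 \ C).card = W2.card - C.card := Finset.card_sdiff_of_subset (Finset.filter_subset _ _)
              have h4' : C.card ≤ W2.card := Finset.card_le_card (Finset.filter_subset _ _)
              have : (W2.filter fun y => R y z).card ≤ (C.filter fun y => R y z).card + (W2.card - C.card) := by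
                omega
              have := (Nat.cast_le (α := ℝ)).mpr this
              push_cast at this
              rw [Nat.cast_sub h4'] at this
              · linarith
            linarith
          calc (A'.card : ℝ) * ((C.card : ℝ) - θ * (W2.card : ℝ))
              ≤ ∑ z ∈ A', ((C.filter fun y => R y z).card : ℝ) := card_mul_le_sum _ _ _ hterm
            _ ≤ ∑ z ∈ W3, ((C.filter fun y => R y z).card : ℝ) := by
                apply Finset.sum_le_sum_of_subset_of_nonneg (Finset.filter_subset _ _)
                intro z _ _; exact Nat.cast_nonneg _
        rw [← hEsw] at hElow
        have hE2 := hElow.trans hEup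
        have hA'0 : (0:ℝ) ≤ (A'.card : ℝ) := Nat.cast_nonneg _
        by_contra hcon
        push_neg at hcon
        have hp1 : (0:ℝ) ≤ (A'.card : ℝ) * ((C.card : ℝ) - 2*θ*(W2.card : ℝ)) :=
          mul_nonneg hA'0 (by linarith)
        have hp2 : (0:ℝ) < (C.card : ℝ) * ((A'.card : ℝ) - 2*θ*(W3.card : ℝ)) :=
          mul_pos hCpos (by linarith)
        nlinarith [hE2, hp1, hp2]
      nlinarith [mul_pos hn3 (by linarith : (0:ℝ) < 1 - (4*θ + η))]

open scoped Classical
open Finset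

private lemma good_fst {β γ δ : Type*} (B : Finset β) (C : Finset γ) (D : Finset δ)
    (G : δ → β → γ → Prop) (ε : ℝ) (hD : 0 < (D.card : ℝ))
    (h : (1 - ε) * ((B.card : ℝ) * (C.card : ℝ)) ≤ (((B ×ˢ C).filter fun p =>
        ((D.filter fun x => G x p.1 p.2).card : ℝ) / (D.card : ℝ) < ε ∨
        1 - ε < ((D.filter fun x => G x p.1 p.2).card : ℝ) / (D.card : ℝ)).card : ℝ)) :
    (1 - ε) * ((B.card : ℝ) * (C.card : ℝ)) ≤ ∑ b ∈ B,
      ((C.filter fun c => ((D.filter fun x => G x b c).card : ℝ) < ε * D.card ∨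
        (1-ε) * D.card < ((D.filter fun x => G x b c).card : ℝ)).card : ℝ) := by
  refine le_trans h ?_
  have heq := card_filter_prod_fst B C (fun b c =>
    ((D.filter fun x => G x b c).card : ℝ) / (D.card : ℝ) < ε ∨
    1 - ε < ((D.filter fun x => G x b c).card : ℝ) / (D.card : ℝ))
  have hle : ∀ b ∈ B,
      (((C.filter fun c => ((D.filter fun x => G x b c).card : ℝ) / (D.card : ℝ) < ε ∨
        1 - ε < ((D.filter fun x => G x b c).card : ℝ) / (D.card : ℝ)).card : ℝ))
      ≤ ((C.filter fun c => ((D.filter fun x => G x b c).card : ℝ) < ε * D.card ∨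
        (1-ε) * D.card < ((D.filter fun x => G x b c).card : ℝ)).card : ℝ) := by
    intro b _
    have hsub : (C.filter fun c => ((D.filter fun x => G x b c).card : ℝ) / (D.card : ℝ) < ε ∨
        1 - ε < ((D.filter fun x => G x b c).card : ℝ) / (D.card : ℝ))
        ⊆ (C.filter fun c => ((D.filter fun x => G x b c).card : ℝ) < ε * D.card ∨
        (1-ε) * D.card < ((D.filter fun x => G x b c).card : ℝ)) := by
      intro c hc
      have hc' := Finset.mem_filter.mp hc
      refine Finset.mem_filter.mpr ⟨hc'.1, ?_⟩
      rcases hc'.2 with h' | h'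
      · exact Or.inl ((div_lt_iff₀ hD).mp h')
      · exact Or.inr ((lt_div_iff₀ hD).mp h')
    exact_mod_cast Finset.card_le_card hsub
  calc (((B ×ˢ C).filter fun p =>
        ((D.filter fun x => G x p.1 p.2).card : ℝ) / (D.card : ℝ) < ε ∨
        1 - ε < ((D.filter fun x => G x p.1 p.2).card : ℝ) / (D.card : ℝ)).card : ℝ)
      = ∑ b ∈ B, (((C.filter fun c => ((D.filter fun x => G x b c).card : ℝ) / (D.card : ℝ) < ε ∨
        1 - ε < ((D.filter fun x => G x b c).card : ℝ) / (D.card : ℝ)).card : ℝ)) := by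
        exact_mod_cast congrArg (Nat.cast : ℕ → ℝ) heq
    _ ≤ _ := Finset.sum_le_sum hle

private lemma good_snd {β γ δ : Type*} (B : Finset β) (C : Finset γ) (D : Finset δ)
    (G : δ → β → γ → Prop) (ε : ℝ) (hD : 0 < (D.card : ℝ))
    (h : (1 - ε) * ((B.card : ℝ) * (C.card : ℝ)) ≤ (((B ×ˢ C).filter fun p =>
        ((D.filter fun x => G x p.1 p.2).card : ℝ) / (D.card : ℝ) < ε ∨
        1 - ε < ((D.filter fun x => G x p.1 p.2).card : ℝ) / (D.card : ℝ)).card : ℝ)) :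
    (1 - ε) * ((B.card : ℝ) * (C.card : ℝ)) ≤ ∑ c ∈ C,
      ((B.filter fun b => ((D.filter fun x => G x b c).card : ℝ) < ε * D.card ∨
        (1-ε) * D.card < ((D.filter fun x => G x b c).card : ℝ)).card : ℝ) := by
  refine le_trans h ?_
  have heq := card_filter_prod_snd B C (fun b c =>
    ((D.filter fun x => G x b c).card : ℝ) / (D.card : ℝ) < ε ∨
    1 - ε < ((D.filter fun x => G x b c).card : ℝ) / (D.card : ℝ))
  have hle : ∀ c ∈ C,
      (((B.filter fun b => ((D.filter fun x => G x b c).card : ℝ) / (D.card : ℝ) < ε ∨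
        1 - ε < ((D.filter fun x => G x b c).card : ℝ) / (D.card : ℝ)).card : ℝ))
      ≤ ((B.filter fun b => ((D.filter fun x => G x b c).card : ℝ) < ε * D.card ∨
        (1-ε) * D.card < ((D.filter fun x => G x b c).card : ℝ)).card : ℝ) := by
    intro c _
    have hsub : (B.filter fun b => ((D.filter fun x => G x b c).card : ℝ) / (D.card : ℝ) < ε ∨
        1 - ε < ((D.filter fun x => G x b c).card : ℝ) / (D.card : ℝ))
        ⊆ (B.filter fun b => ((D.filter fun x => G x b c).card : ℝ) < ε * D.card ∨
        (1-ε) * D.card < ((D.filter fun x => G x b c).card : ℝ)) := by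
      intro b hb
      have hb' := Finset.mem_filter.mp hb
      refine Finset.mem_filter.mpr ⟨hb'.1, ?_⟩
      rcases hb'.2 with h' | h'
      · exact Or.inl ((div_lt_iff₀ hD).mp h')
      · exact Or.inr ((lt_div_iff₀ hD).mp h')
    exact_mod_cast Finset.card_le_card hsub
  calc (((B ×ˢ C).filter fun p =>
        ((D.filter fun x => G x p.1 p.2).card : ℝ) / (D.card : ℝ) < ε ∨
        1 - ε < ((D.filter fun x => G x p.1 p.2).card : ℝ) / (D.card : ℝ)).card : ℝ)
      = ∑ c ∈ C, (((B.filter fun b => ((D.filter fun x => G x b c).card : ℝ) / (D.card : ℝ) < ε ∨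
        1 - ε < ((D.filter fun x => G x b c).card : ℝ) / (D.card : ℝ)).card : ℝ)) := by
        exact_mod_cast congrArg (Nat.cast : ℕ → ℝ) heq
    _ ≤ _ := Finset.sum_le_sum hle


set_option maxHeartbeats 2000000 in
/-- Lemma 2.5, Symmetry Lemma for 3-graphs: if `0 < ε < 1/100`
and `H = (V₁ ∪ V₂ ∪ V₃, E)` is a tripartite 3-graph in which each `Vᵢ` is
almost `ε`-good, then `d_H(V₁,V₂,V₃) ∈ [0, 4ε^(1/16)) ∪ (1-4ε^(1/16), 1]`. -/
theorem stmt_4 {α : Type*} [DecidableEq α] (ε : ℝ) (hε0 : 0 < ε) (hε1 : ε < 1/100)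
    (V1 V2 V3 : Finset α)
    (h12 : Disjoint V1 V2) (h13 : Disjoint V1 V3) (h23 : Disjoint V2 V3)
    (E : α → α → α → Prop)
    -- `V₁` is almost `ε`-good with respect to `H`
    (good1 : (1 - ε) * ((V2.card : ℝ) * (V3.card : ℝ)) ≤
      (((V2 ×ˢ V3).filter fun p =>
        ((V1.filter fun x => E x p.1 p.2).card : ℝ) / (V1.card : ℝ) < ε ∨
        1 - ε < ((V1.filter fun x => E x p.1 p.2).card : ℝ) / (V1.card : ℝ)).card : ℝ))
    -- `V₂` is almost `ε`-good with respect to `H`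
    (good2 : (1 - ε) * ((V1.card : ℝ) * (V3.card : ℝ)) ≤
      (((V1 ×ˢ V3).filter fun p =>
        ((V2.filter fun y => E p.1 y p.2).card : ℝ) / (V2.card : ℝ) < ε ∨
        1 - ε < ((V2.filter fun y => E p.1 y p.2).card : ℝ) / (V2.card : ℝ)).card : ℝ))
    -- `V₃` is almost `ε`-good with respect to `H`
    (good3 : (1 - ε) * ((V1.card : ℝ) * (V2.card : ℝ)) ≤
      (((V1 ×ˢ V2).filter fun p =>
        ((V3.filter fun z => E p.1 p.2 z).card : ℝ) / (V3.card : ℝ) < ε ∨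
        1 - ε < ((V3.filter fun z => E p.1 p.2 z).card : ℝ) / (V3.card : ℝ)).card : ℝ)) :
    (((V1 ×ˢ V2 ×ˢ V3).filter fun p => E p.1 p.2.1 p.2.2).card : ℝ) /
        ((V1.card : ℝ) * (V2.card : ℝ) * (V3.card : ℝ)) < 4 * ε ^ ((1:ℝ)/16) ∨
      1 - 4 * ε ^ ((1:ℝ)/16) <
        (((V1 ×ˢ V2 ×ˢ V3).filter fun p => E p.1 p.2.1 p.2.2).card : ℝ) /
          ((V1.card : ℝ) * (V2.card : ℝ) * (V3.card : ℝ)) := by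
  
  have hu : 0 < ε ^ ((1:ℝ)/16) := Real.rpow_pos_of_pos hε0 _
  by_cases hdeg : (V1.card : ℝ) * (V2.card : ℝ) * (V3.card : ℝ) = 0
  · left
    rw [hdeg, div_zero]
    positivity
  have hne := mul_ne_zero_iff.mp hdeg
  have hne' := mul_ne_zero_iff.mp hne.1
  have hn1 : (0:ℝ) < (V1.card : ℝ) := lt_of_le_of_ne (Nat.cast_nonneg _) (Ne.symm hne'.1)
  have hn2 : (0:ℝ) < (V2.card : ℝ) := lt_of_le_of_ne (Nat.cast_nonneg _) (Ne.symm hne'.2)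
  have hn3 : (0:ℝ) < (V3.card : ℝ) := lt_of_le_of_ne (Nat.cast_nonneg _) (Ne.symm hne.2)
  have hprod : (0:ℝ) < (V1.card : ℝ) * (V2.card : ℝ) * (V3.card : ℝ) := by positivity
  have hε2 : ε ≤ 1/2 := by linarith
  -- normalized goodness statements
  have g1y := good_fst V2 V3 V1 (fun x y z => E x y z) ε hn1 good1
  have g1z := good_snd V2 V3 V1 (fun x y z => E x y z) ε hn1 good1
  have g3y := good_snd V1 V2 V3 (fun z x y => E x y z) ε hn3 good3
  have g2z := good_snd V1 V3 V2 (fun y x z => E x y z) ε hn2 good2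
  beta_reduce at g1y g1z g3y g2z
  -- Step B applied twice
  have hmin2 := stepB V1 V2 V3 E ε hε0 hε2 hn1 g3y g1y
  rw [show (V2.card : ℝ) * (V3.card : ℝ) = (V3.card : ℝ) * (V2.card : ℝ) from mul_comm _ _] at g1z
  have hmin3 := stepB V1 V3 V2 (fun x z y => E x y z) ε hε0 hε2 hn1 g2z g1z
  beta_reduce at hmin2 hmin3
  -- Markov: most vertices have extreme degree in the `big pairs' graph
  set θ := Real.sqrt ε with hθdef
  have hθ0 : 0 < θ := Real.sqrt_pos.mpr hε0
  have hθ110 : θ < 1/10 := by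
    rw [hθdef]
    rw [show (1/10 : ℝ) = Real.sqrt (1/100) by
      rw [show (1/100 : ℝ) = (1/10)^2 by norm_num, Real.sqrt_sq (by norm_num)]]
    exact Real.sqrt_lt_sqrt hε0.le hε1
  have hθsq : θ * θ = ε := Real.mul_self_sqrt hε0.le
  have hM2 : ((V2.filter fun y => θ * (V3.card : ℝ) ≤
        ((V3.filter fun z => (1-ε) * (V1.card : ℝ) < ((V1.filter fun x => E x y z).card : ℝ)).card : ℝ) ∧
        ((V3.filter fun z => (1-ε) * (V1.card : ℝ) < ((V1.filter fun x => E x y z).card : ℝ)).card : ℝ)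
          ≤ (1-θ) * (V3.card : ℝ)).card : ℝ) ≤ (6*θ) * (V2.card : ℝ) := by
    have hmono : ∀ y ∈ (V2.filter fun y => θ * (V3.card : ℝ) ≤
        ((V3.filter fun z => (1-ε) * (V1.card : ℝ) < ((V1.filter fun x => E x y z).card : ℝ)).card : ℝ) ∧
        ((V3.filter fun z => (1-ε) * (V1.card : ℝ) < ((V1.filter fun x => E x y z).card : ℝ)).card : ℝ)
          ≤ (1-θ) * (V3.card : ℝ)),
        θ * (V3.card : ℝ) ≤ min
          ((V3.filter fun z => (1-ε) * (V1.card : ℝ) < ((V1.filter fun x => E x y z).card : ℝ)).card : ℝ)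
          ((V3.card : ℝ) - ((V3.filter fun z => (1-ε) * (V1.card : ℝ) < ((V1.filter fun x => E x y z).card : ℝ)).card : ℝ)) := by
      intro y hy
      have hy' := (Finset.mem_filter.mp hy).2
      exact le_min hy'.1 (by linarith [hy'.2])
    have h1 := card_mul_le_sum _ _ _ hmono
    have h2 : ∑ y ∈ (V2.filter fun y => θ * (V3.card : ℝ) ≤
        ((V3.filter fun z => (1-ε) * (V1.card : ℝ) < ((V1.filter fun x => E x y z).card : ℝ)).card : ℝ) ∧
        ((V3.filter fun z => (1-ε) * (V1.card : ℝ) < ((V1.filter fun x => E x y z).card : ℝ)).card : ℝ)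
          ≤ (1-θ) * (V3.card : ℝ)), min
          ((V3.filter fun z => (1-ε) * (V1.card : ℝ) < ((V1.filter fun x => E x y z).card : ℝ)).card : ℝ)
          ((V3.card : ℝ) - ((V3.filter fun z => (1-ε) * (V1.card : ℝ) < ((V1.filter fun x => E x y z).card : ℝ)).card : ℝ))
        ≤ ∑ y ∈ V2, min
          ((V3.filter fun z => (1-ε) * (V1.card : ℝ) < ((V1.filter fun x => E x y z).card : ℝ)).card : ℝ)
          ((V3.card : ℝ) - ((V3.filter fun z => (1-ε) * (V1.card : ℝ) < ((V1.filter fun x => E x y z).card : ℝ)).card : ℝ)) := by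
      apply Finset.sum_le_sum_of_subset_of_nonneg (Finset.filter_subset _ _)
      intro y _ _
      have hle3 := card_filter_le_real V3
        (fun z => (1-ε) * (V1.card : ℝ) < ((V1.filter fun x => E x y z).card : ℝ))
      exact le_min (Nat.cast_nonneg _) (by linarith)
    have hchain := le_trans h1 (le_trans h2 hmin2)
    have heq : 6 * ε * ((V2.card : ℝ) * (V3.card : ℝ)) = ((6*θ) * (V2.card : ℝ)) * (θ * (V3.card : ℝ)) := by
      rw [← hθsq]; ring
    rw [heq] at hchain
    exact le_of_mul_le_mul_right hchain (by positivity)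
  have hM3 : ((V3.filter fun z => θ * (V2.card : ℝ) ≤
        ((V2.filter fun y => (1-ε) * (V1.card : ℝ) < ((V1.filter fun x => E x y z).card : ℝ)).card : ℝ) ∧
        ((V2.filter fun y => (1-ε) * (V1.card : ℝ) < ((V1.filter fun x => E x y z).card : ℝ)).card : ℝ)
          ≤ (1-θ) * (V2.card : ℝ)).card : ℝ) ≤ (6*θ) * (V3.card : ℝ) := by
    have hmono : ∀ z ∈ (V3.filter fun z => θ * (V2.card : ℝ) ≤
        ((V2.filter fun y => (1-ε) * (V1.card : ℝ) < ((V1.filter fun x => E x y z).card : ℝ)).card : ℝ) ∧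
        ((V2.filter fun y => (1-ε) * (V1.card : ℝ) < ((V1.filter fun x => E x y z).card : ℝ)).card : ℝ)
          ≤ (1-θ) * (V2.card : ℝ)),
        θ * (V2.card : ℝ) ≤ min
          ((V2.filter fun y => (1-ε) * (V1.card : ℝ) < ((V1.filter fun x => E x y z).card : ℝ)).card : ℝ)
          ((V2.card : ℝ) - ((V2.filter fun y => (1-ε) * (V1.card : ℝ) < ((V1.filter fun x => E x y z).card : ℝ)).card : ℝ)) := by
      intro z hz
      have hz' := (Finset.mem_filter.mp hz).2
      exact le_min hz'.1 (by linarith [hz'.2])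
    have h1 := card_mul_le_sum _ _ _ hmono
    have h2 : ∑ z ∈ (V3.filter fun z => θ * (V2.card : ℝ) ≤
        ((V2.filter fun y => (1-ε) * (V1.card : ℝ) < ((V1.filter fun x => E x y z).card : ℝ)).card : ℝ) ∧
        ((V2.filter fun y => (1-ε) * (V1.card : ℝ) < ((V1.filter fun x => E x y z).card : ℝ)).card : ℝ)
          ≤ (1-θ) * (V2.card : ℝ)), min
          ((V2.filter fun y => (1-ε) * (V1.card : ℝ) < ((V1.filter fun x => E x y z).card : ℝ)).card : ℝ)
          ((V2.card : ℝ) - ((V2.filter fun y => (1-ε) * (V1.card : ℝ) < ((V1.filter fun x => E x y z).card : ℝ)).card : ℝ))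
        ≤ ∑ z ∈ V3, min
          ((V2.filter fun y => (1-ε) * (V1.card : ℝ) < ((V1.filter fun x => E x y z).card : ℝ)).card : ℝ)
          ((V2.card : ℝ) - ((V2.filter fun y => (1-ε) * (V1.card : ℝ) < ((V1.filter fun x => E x y z).card : ℝ)).card : ℝ)) := by
      apply Finset.sum_le_sum_of_subset_of_nonneg (Finset.filter_subset _ _)
      intro z _ _
      have hle2 := card_filter_le_real V2
        (fun y => (1-ε) * (V1.card : ℝ) < ((V1.filter fun x => E x y z).card : ℝ))
      exact le_min (Nat.cast_nonneg _) (by linarith)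
    have hchain := le_trans h1 (le_trans h2 hmin3)
    have heq : 6 * ε * ((V3.card : ℝ) * (V2.card : ℝ)) = ((6*θ) * (V3.card : ℝ)) * (θ * (V2.card : ℝ)) := by
      rw [← hθsq]; ring
    rw [heq] at hchain
    exact le_of_mul_le_mul_right hchain (by positivity)
  -- the graph symmetry lemma applied to the graph of `big' pairs
  have hdi := graphSym V2 V3
    (fun y z => (1-ε) * (V1.card : ℝ) < ((V1.filter fun x => E x y z).card : ℝ))
    θ (6*θ) hθ0 (by linarith) (by positivity) hn2 hn3 (by linarith) hM2 hM3
  beta_reduce at hdi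
  -- relate the triple count to the sum of big-pair degrees
  have hT : (((V1 ×ˢ V2 ×ˢ V3).filter fun p => E p.1 p.2.1 p.2.2).card : ℝ)
      = ∑ y ∈ V2, ∑ z ∈ V3, ((V1.filter fun x => E x y z).card : ℝ) := by
    rw [card_filter_triple]
    push_cast
    rfl
  -- per-y upper bound for the number of triples
  have hyup : ∀ y ∈ V2, ∑ z ∈ V3, ((V1.filter fun x => E x y z).card : ℝ)
      ≤ ((V3.filter fun z => ((V1.filter fun x => E x y z).card : ℝ) < ε * V1.card).card : ℝ) * (ε * V1.card)
        + ((V3.filter fun z => (1-ε) * V1.card < ((V1.filter fun x => E x y z).card : ℝ)).card : ℝ) * V1.card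
        + ((V3.filter fun z => ¬(((V1.filter fun x => E x y z).card : ℝ) < ε * V1.card ∨
            (1-ε) * V1.card < ((V1.filter fun x => E x y z).card : ℝ))).card : ℝ) * V1.card := by
    intro y _
    have hsplit := Finset.sum_filter_add_sum_filter_not V3
      (fun z => ((V1.filter fun x => E x y z).card : ℝ) < ε * V1.card ∨
        (1-ε) * V1.card < ((V1.filter fun x => E x y z).card : ℝ))
      (fun z => ((V1.filter fun x => E x y z).card : ℝ))
    have hor : V3.filter (fun z => ((V1.filter fun x => E x y z).card : ℝ) < ε * V1.card ∨
        (1-ε) * V1.card < ((V1.filter fun x => E x y z).card : ℝ))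
        = (V3.filter fun z => ((V1.filter fun x => E x y z).card : ℝ) < ε * V1.card)
          ∪ (V3.filter fun z => (1-ε) * V1.card < ((V1.filter fun x => E x y z).card : ℝ)) :=
      Finset.filter_or _ _ _
    have hdisj : Disjoint (V3.filter fun z => ((V1.filter fun x => E x y z).card : ℝ) < ε * V1.card)
        (V3.filter fun z => (1-ε) * V1.card < ((V1.filter fun x => E x y z).card : ℝ)) := by
      rw [Finset.disjoint_left]
      intro z hz1 hz2
      have h1 := (Finset.mem_filter.mp hz1).2
      have h2 := (Finset.mem_filter.mp hz2).2
      nlinarith [mul_nonneg (by linarith : (0:ℝ) ≤ 1 - 2*ε) hn1.le]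
    rw [hor, Finset.sum_union hdisj] at hsplit
    have b1 : ∑ z ∈ (V3.filter fun z => ((V1.filter fun x => E x y z).card : ℝ) < ε * V1.card),
        ((V1.filter fun x => E x y z).card : ℝ)
        ≤ ((V3.filter fun z => ((V1.filter fun x => E x y z).card : ℝ) < ε * V1.card).card : ℝ) * (ε * V1.card) :=
      sum_le_card_mul _ _ _ (fun z hz => (Finset.mem_filter.mp hz).2.le)
    have b2 : ∑ z ∈ (V3.filter fun z => (1-ε) * V1.card < ((V1.filter fun x => E x y z).card : ℝ)),
        ((V1.filter fun x => E x y z).card : ℝ)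
        ≤ ((V3.filter fun z => (1-ε) * V1.card < ((V1.filter fun x => E x y z).card : ℝ)).card : ℝ) * V1.card :=
      sum_le_card_mul _ _ _ (fun z _ => card_filter_le_real _ _)
    have b3 : ∑ z ∈ (V3.filter fun z => ¬(((V1.filter fun x => E x y z).card : ℝ) < ε * V1.card ∨
          (1-ε) * V1.card < ((V1.filter fun x => E x y z).card : ℝ))),
        ((V1.filter fun x => E x y z).card : ℝ)
        ≤ ((V3.filter fun z => ¬(((V1.filter fun x => E x y z).card : ℝ) < ε * V1.card ∨
          (1-ε) * V1.card < ((V1.filter fun x => E x y z).card : ℝ))).card : ℝ) * V1.card :=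
      sum_le_card_mul _ _ _ (fun z _ => card_filter_le_real _ _)
    linarith
  -- sum of the exceptional counts
  have hXsum : ∑ y ∈ V2, ((V3.filter fun z => ¬(((V1.filter fun x => E x y z).card : ℝ) < ε * V1.card ∨
        (1-ε) * V1.card < ((V1.filter fun x => E x y z).card : ℝ))).card : ℝ)
      ≤ ε * ((V2.card : ℝ) * (V3.card : ℝ)) := by
    have hid : ∀ y : α, ((V3.filter fun z => ¬(((V1.filter fun x => E x y z).card : ℝ) < ε * V1.card ∨
          (1-ε) * V1.card < ((V1.filter fun x => E x y z).card : ℝ))).card : ℝ)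
        = (V3.card : ℝ) - ((V3.filter fun z => (((V1.filter fun x => E x y z).card : ℝ) < ε * V1.card ∨
          (1-ε) * V1.card < ((V1.filter fun x => E x y z).card : ℝ))).card : ℝ) := by
      intro y
      have := Finset.card_filter_add_card_filter_not (s := V3)
        (p := fun z => (((V1.filter fun x => E x y z).card : ℝ) < ε * V1.card ∨
          (1-ε) * V1.card < ((V1.filter fun x => E x y z).card : ℝ)))
      have h' : ((V3.filter fun z => (((V1.filter fun x => E x y z).card : ℝ) < ε * V1.card ∨
            (1-ε) * V1.card < ((V1.filter fun x => E x y z).card : ℝ))).card : ℝ)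
          + ((V3.filter fun z => ¬(((V1.filter fun x => E x y z).card : ℝ) < ε * V1.card ∨
            (1-ε) * V1.card < ((V1.filter fun x => E x y z).card : ℝ))).card : ℝ) = (V3.card : ℝ) := by
        exact_mod_cast this
      linarith
    rw [Finset.sum_congr rfl (fun y _ => hid y), Finset.sum_sub_distrib, Finset.sum_const, nsmul_eq_mul]
    linarith [g1y]
  -- global bounds on the triple count
  have hbsum : ∑ y ∈ V2, ((V3.filter fun z => ((V1.filter fun x => E x y z).card : ℝ) < ε * V1.card).card : ℝ)
      ≤ (V2.card : ℝ) * (V3.card : ℝ) :=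
    sum_le_card_mul _ _ _ (fun y _ => card_filter_le_real _ _)
  have hTup : (((V1 ×ˢ V2 ×ˢ V3).filter fun p => E p.1 p.2.1 p.2.2).card : ℝ)
      ≤ (∑ y ∈ V2, ((V3.filter fun z => (1-ε) * V1.card < ((V1.filter fun x => E x y z).card : ℝ)).card : ℝ))
          * (V1.card : ℝ)
        + 2 * ε * ((V1.card : ℝ) * ((V2.card : ℝ) * (V3.card : ℝ))) := by
    rw [hT]
    calc ∑ y ∈ V2, ∑ z ∈ V3, ((V1.filter fun x => E x y z).card : ℝ)
        ≤ ∑ y ∈ V2, (((V3.filter fun z => ((V1.filter fun x => E x y z).card : ℝ) < ε * V1.card).card : ℝ) * (ε * V1.card)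
          + ((V3.filter fun z => (1-ε) * V1.card < ((V1.filter fun x => E x y z).card : ℝ)).card : ℝ) * V1.card
          + ((V3.filter fun z => ¬(((V1.filter fun x => E x y z).card : ℝ) < ε * V1.card ∨
              (1-ε) * V1.card < ((V1.filter fun x => E x y z).card : ℝ))).card : ℝ) * V1.card) :=
          Finset.sum_le_sum hyup
      _ = (∑ y ∈ V2, ((V3.filter fun z => ((V1.filter fun x => E x y z).card : ℝ) < ε * V1.card).card : ℝ)) * (ε * V1.card)
          + (∑ y ∈ V2, ((V3.filter fun z => (1-ε) * V1.card < ((V1.filter fun x => E x y z).card : ℝ)).card : ℝ)) * (V1.card : ℝ)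
          + (∑ y ∈ V2, ((V3.filter fun z => ¬(((V1.filter fun x => E x y z).card : ℝ) < ε * V1.card ∨
              (1-ε) * V1.card < ((V1.filter fun x => E x y z).card : ℝ))).card : ℝ)) * (V1.card : ℝ) := by
          rw [Finset.sum_add_distrib, Finset.sum_add_distrib, ← Finset.sum_mul, ← Finset.sum_mul, ← Finset.sum_mul]
      _ ≤ (∑ y ∈ V2, ((V3.filter fun z => (1-ε) * V1.card < ((V1.filter fun x => E x y z).card : ℝ)).card : ℝ))
            * (V1.card : ℝ)
          + 2 * ε * ((V1.card : ℝ) * ((V2.card : ℝ) * (V3.card : ℝ))) := by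
          have c1 : (∑ y ∈ V2, ((V3.filter fun z => ((V1.filter fun x => E x y z).card : ℝ) < ε * V1.card).card : ℝ)) * (ε * V1.card)
              ≤ ((V2.card : ℝ) * (V3.card : ℝ)) * (ε * V1.card) :=
            mul_le_mul_of_nonneg_right hbsum (by positivity)
          have c3 : (∑ y ∈ V2, ((V3.filter fun z => ¬(((V1.filter fun x => E x y z).card : ℝ) < ε * V1.card ∨
              (1-ε) * V1.card < ((V1.filter fun x => E x y z).card : ℝ))).card : ℝ)) * (V1.card : ℝ)
              ≤ (ε * ((V2.card : ℝ) * (V3.card : ℝ))) * (V1.card : ℝ) :=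
            mul_le_mul_of_nonneg_right hXsum hn1.le
          nlinarith [c1, c3]
  have hTlow : (∑ y ∈ V2, ((V3.filter fun z => (1-ε) * V1.card < ((V1.filter fun x => E x y z).card : ℝ)).card : ℝ))
        * ((1-ε) * (V1.card : ℝ))
      ≤ (((V1 ×ˢ V2 ×ˢ V3).filter fun p => E p.1 p.2.1 p.2.2).card : ℝ) := by
    rw [hT, Finset.sum_mul]
    apply Finset.sum_le_sum
    intro y _
    calc ((V3.filter fun z => (1-ε) * V1.card < ((V1.filter fun x => E x y z).card : ℝ)).card : ℝ)
          * ((1-ε) * (V1.card : ℝ))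
        ≤ ∑ z ∈ (V3.filter fun z => (1-ε) * V1.card < ((V1.filter fun x => E x y z).card : ℝ)),
          ((V1.filter fun x => E x y z).card : ℝ) :=
          card_mul_le_sum _ _ _ (fun z hz => (Finset.mem_filter.mp hz).2.le)
      _ ≤ ∑ z ∈ V3, ((V1.filter fun x => E x y z).card : ℝ) := by
          apply Finset.sum_le_sum_of_subset_of_nonneg (Finset.filter_subset _ _)
          intro z _ _; exact Nat.cast_nonneg _
  -- conclude
  have hnum := num_bound hε0 hε1
  rcases hdi with hlow | hhigh
  · left
    rw [div_lt_iff₀ hprod]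
    have hfinal : (((V1 ×ˢ V2 ×ˢ V3).filter fun p => E p.1 p.2.1 p.2.2).card : ℝ)
        ≤ (9*θ + 2*ε) * ((V1.card : ℝ) * (V2.card : ℝ) * (V3.card : ℝ)) := by
      have := mul_le_mul_of_nonneg_right hlow hn1.le
      nlinarith [hTup]
    have := mul_lt_mul_of_pos_right (show 9*θ + 2*ε < 4 * ε ^ ((1:ℝ)/16) by
      rw [hθdef]; linarith [hnum]) hprod
    linarith
  · right
    rw [lt_div_iff₀ hprod]
    have h9 : (0:ℝ) < 1 - 9*θ := by linarith
    have hfinal : (1 - 9*θ - ε) * ((V1.card : ℝ) * (V2.card : ℝ) * (V3.card : ℝ))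
        ≤ (((V1 ×ˢ V2 ×ˢ V3).filter fun p => E p.1 p.2.1 p.2.2).card : ℝ) := by
      have hstep := mul_le_mul_of_nonneg_right hhigh (mul_nonneg (by linarith) hn1.le : (0:ℝ) ≤ (1-ε) * (V1.card : ℝ))
      have : ((1 - (3*θ+6*θ)) * ((V2.card : ℝ) * (V3.card : ℝ))) * ((1-ε) * (V1.card : ℝ))
          ≥ (1 - 9*θ - ε) * ((V1.card : ℝ) * (V2.card : ℝ) * (V3.card : ℝ)) := by
        nlinarith [mul_nonneg (mul_nonneg hn1.le hn2.le) hn3.le,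
          mul_nonneg (mul_nonneg (mul_nonneg hn1.le hn2.le) hn3.le) (mul_nonneg hθ0.le hε0.le)]
      linarith [hTlow, hstep]
    have hlt : (1 - 4 * ε ^ ((1:ℝ)/16)) * ((V1.card : ℝ) * (V2.card : ℝ) * (V3.card : ℝ))
        < (1 - 9*θ - ε) * ((V1.card : ℝ) * (V2.card : ℝ) * (V3.card : ℝ)) := by
      apply mul_lt_mul_of_pos_right _ hprod
      rw [hθdef]
      linarith [hnum]
    linarith
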